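/- For every positive integer n, odd positive integer q, the sum over all elements w of the hyperoctahedral group B_n (signed permutations of {1,...,n}) of the product (q+1-2d(w))(q+3-2d(w))···(q+2n-1-2d(w)) equals q^n · 2^n · n!, where d(w) is the number of type-B descents of w. -/

import Mathlib

/-- A signed permutation in `B_n`, encoded as an underlying permutation of
`{0,...,n-1}` together with a sign for each position. -/
abbrev SignedPerm (n : ℕ) := Equiv.Perm (Fin n) × (Fin n → Bool)

/-- The value `w(i) ∈ {±1, ..., ±n}` of the signed permutation at position `i`
(`1`-indexed position `i+1`). -/
def signedVal (n : ℕ) (w : SignedPerm n) (i : Fin n) : ℤ :=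
  if w.2 i then -((w.1 i : ℤ) + 1) else (w.1 i : ℤ) + 1

/-- Rank of a value in the linear order `Λ`:
`+1 < +2 < ... < +n < n+1 < -n < ... < -2 < -1`. -/
def lamRank (n : ℕ) (a : ℤ) : ℤ := if 0 < a then a else 2 * n + 2 + a

/-- The value at position `i+1`, with the convention `w(n+1) = n+1`. -/
def nextVal (n : ℕ) (w : SignedPerm n) (i : Fin n) : ℤ :=
  if h : (i : ℕ) + 1 < n then signedVal n w ⟨(i : ℕ) + 1, h⟩ else ((n : ℤ) + 1)

/-- The number of type-`B` descents of `w`: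
`d(w) = |{i : 1 ≤ i ≤ n, w(i) <_Λ w(i+1)}|` with `w(n+1) = n+1`. -/
def bDescents (n : ℕ) (w : SignedPerm n) : ℕ :=
  (Finset.univ.filter (fun i : Fin n =>
    lamRank n (signedVal n w i) < lamRank n (nextVal n w i))).card

/-! ### Auxiliary development -/

open Finset

/-- The word of `Λ`-ranks of `w`, extended by the boundary value `n+1` at all
positions `≥ n`. -/
def wordB (n : ℕ) (w : SignedPerm n) (i : ℕ) : ℤ :=
  if h : i < n then lamRank n (signedVal n w ⟨i, h⟩) else ((n : ℤ) + 1)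

lemma bDescents_cast (n : ℕ) (w : SignedPerm n) :
    (bDescents n w : ℤ) =
      ∑ i ∈ Finset.range n, (if wordB n w i < wordB n w (i + 1) then (1 : ℤ) else 0) := by
  have h1 : ∀ i : Fin n,
      (if lamRank n (signedVal n w i) < lamRank n (nextVal n w i) then (1 : ℤ) else 0) =
      (if wordB n w ↑i < wordB n w (↑i + 1) then (1 : ℤ) else 0) := by
    intro i
    have e1 : wordB n w ↑i = lamRank n (signedVal n w i) := by
      rw [wordB, dif_pos i.isLt]
    have e2 : wordB n w (↑i + 1) = lamRank n (nextVal n w i) := by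
      rw [wordB, nextVal]
      by_cases h : (i : ℕ) + 1 < n
      · rw [dif_pos h, dif_pos h]
      · rw [dif_neg h, dif_neg h]; simp [lamRank]
    rw [e1, e2]
  rw [bDescents, Finset.card_filter]
  push_cast
  rw [← Fin.sum_univ_eq_sum_range
    (fun i => if wordB n w i < wordB n w (i + 1) then (1 : ℤ) else 0)]
  exact Finset.sum_congr rfl (fun i _ => h1 i)

/-- The monotone embedding of old ranks into new ranks when passing from `B_n`
to `B_{n+1}`. -/
def phiB (n : ℕ) (x : ℤ) : ℤ := if x ≤ n then x else if x = n + 1 then x + 1 else x + 2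

lemma phiB_lt_phiB {n : ℕ} {x y : ℤ} : phiB n x < phiB n y ↔ x < y := by
  unfold phiB; split_ifs <;> omega

lemma phiB_lt_low {n : ℕ} {x : ℤ} : phiB n x < (n : ℤ) + 1 ↔ x ≤ n := by
  unfold phiB; split_ifs <;> omega

lemma low_lt_phiB {n : ℕ} {x : ℤ} : (n : ℤ) + 1 < phiB n x ↔ (n : ℤ) < x := by
  unfold phiB; split_ifs <;> omega

lemma phiB_lt_high {n : ℕ} {x : ℤ} : phiB n x < (n : ℤ) + 3 ↔ x ≤ (n : ℤ) + 1 := by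
  unfold phiB; split_ifs <;> omega

lemma high_lt_phiB {n : ℕ} {x : ℤ} : (n : ℤ) + 3 < phiB n x ↔ (n : ℤ) + 1 < x := by
  unfold phiB; split_ifs <;> omega

/-- Inserting the new largest letter at position `p`. -/
def insP {n : ℕ} (σ : Equiv.Perm (Fin n)) (p : Fin (n + 1)) : Equiv.Perm (Fin (n + 1)) :=
  ((finSuccEquiv' p).trans σ.optionCongr).trans (finSuccEquiv' (Fin.last n)).symm

lemma insP_self {n : ℕ} (σ : Equiv.Perm (Fin n)) (p : Fin (n + 1)) :
    insP σ p p = Fin.last n := by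
  simp [insP, Equiv.trans_apply, finSuccEquiv'_at, finSuccEquiv'_symm_none]

lemma insP_succAbove {n : ℕ} (σ : Equiv.Perm (Fin n)) (p : Fin (n + 1)) (i : Fin n) :
    insP σ p (p.succAbove i) = (σ i).castSucc := by
  simp [insP, Equiv.trans_apply, finSuccEquiv'_succAbove, finSuccEquiv'_symm_some,
    Fin.succAbove_last]

/-- Insertion of a new signed letter `±(n+1)` at position `p`. -/
def insW (n : ℕ) (w : SignedPerm n) (p : Fin (n + 1)) (s : Bool) : SignedPerm (n + 1) :=
  (insP w.1 p, p.insertNth s w.2)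

lemma signedVal_insW_self (n : ℕ) (w : SignedPerm n) (p : Fin (n + 1)) (s : Bool) :
    signedVal (n + 1) (insW n w p s) p =
      if s then -((n : ℤ) + 1) else (n : ℤ) + 1 := by
  simp [signedVal, insW, insP_self, Fin.insertNth_apply_same, Fin.val_last]

lemma signedVal_insW_succAbove (n : ℕ) (w : SignedPerm n) (p : Fin (n + 1)) (s : Bool)
    (i : Fin n) :
    signedVal (n + 1) (insW n w p s) (p.succAbove i) = signedVal n w i := by
  simp [signedVal, insW, insP_succAbove, Fin.insertNth_apply_succAbove, Fin.coe_castSucc]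

lemma signedVal_bounds (n : ℕ) (w : SignedPerm n) (i : Fin n) :
    (1 ≤ signedVal n w i ∧ signedVal n w i ≤ n) ∨
      (-(n : ℤ) ≤ signedVal n w i ∧ signedVal n w i ≤ -1) := by
  have h : ((w.1 i : ℕ) : ℤ) < n := by exact_mod_cast (w.1 i).isLt
  unfold signedVal; split_ifs <;> omega

lemma lamRank_succ (n : ℕ) (a : ℤ)
    (h : (1 ≤ a ∧ a ≤ n) ∨ (-(n : ℤ) ≤ a ∧ a ≤ -1)) :
    lamRank (n + 1) a = phiB n (lamRank n a) := by
  unfold lamRank phiB; push_cast; split_ifs <;> omega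

lemma wordB_insW (n : ℕ) (w : SignedPerm n) (p : Fin (n + 1)) (s : Bool) (j : ℕ) :
    wordB (n + 1) (insW n w p s) j =
      if j < (p : ℕ) then phiB n (wordB n w j)
      else if j = (p : ℕ) then (if s then (n : ℤ) + 3 else (n : ℤ) + 1)
      else phiB n (wordB n w (j - 1)) := by
  have hp : (p : ℕ) ≤ n := Fin.is_le p
  by_cases h1 : j < (p : ℕ)
  · have hj : j < n := by omega
    have hj1 : j < n + 1 := by omega
    have hsa : p.succAbove ⟨j, hj⟩ = ⟨j, hj1⟩ := by
      rw [Fin.succAbove_of_castSucc_lt]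
      · rfl
      · simpa [Fin.lt_def] using h1
    rw [if_pos h1, wordB, dif_pos hj1, show (⟨j, hj1⟩ : Fin (n+1)) = p.succAbove ⟨j, hj⟩ from hsa.symm,
      signedVal_insW_succAbove, wordB, dif_pos hj,
      lamRank_succ n _ (signedVal_bounds n w _)]
  · rw [if_neg h1]
    by_cases h2 : j = (p : ℕ)
    · have hj1 : j < n + 1 := by omega
      have hep : (⟨j, hj1⟩ : Fin (n + 1)) = p := Fin.ext h2
      rw [if_pos h2, wordB, dif_pos hj1, hep, signedVal_insW_self]
      cases s
      · rw [if_neg (by simp), if_neg (by simp), lamRank, if_pos (by positivity)]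
      · rw [if_pos rfl, if_pos rfl, lamRank, if_neg (by omega)]
        push_cast; ring
    · rw [if_neg h2]
      by_cases h3 : j < n + 1
      · have hj0 : 1 ≤ j := by omega
        have hjm : j - 1 < n := by omega
        have hsa : p.succAbove ⟨j - 1, hjm⟩ = ⟨j, h3⟩ := by
          rw [Fin.succAbove_of_le_castSucc]
          · apply Fin.ext; simp [Fin.val_succ]; omega
          · simp [Fin.le_def]; omega
        rw [wordB, dif_pos h3, show (⟨j, h3⟩ : Fin (n+1)) = p.succAbove ⟨j - 1, hjm⟩ from hsa.symm,
          signedVal_insW_succAbove, wordB, dif_pos hjm,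
          lamRank_succ n _ (signedVal_bounds n w _)]
      · have hjm : ¬ (j - 1 < n) := by omega
        rw [wordB, dif_neg h3, wordB, dif_neg hjm]
        rw [phiB, if_neg (by omega), if_pos rfl]
        push_cast; ring

/-- The descent-count change upon insertion, as an explicit integer. -/
def deltaB (n : ℕ) (w : SignedPerm n) (P : ℕ) (t : ℤ) : ℤ :=
  if P = 0 then (if t < wordB n w 0 then 1 else 0)
  else (if wordB n w (P - 1) ≤ t then 1 else 0) + (if t < wordB n w P then 1 else 0)
       - (if wordB n w (P - 1) < wordB n w P then 1 else 0)

lemma deltaB_mem (n : ℕ) (w : SignedPerm n) (P : ℕ) (t : ℤ) :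
    deltaB n w P t = 0 ∨ deltaB n w P t = 1 := by
  unfold deltaB; split_ifs <;> omega

lemma bDescents_insW (n : ℕ) (w : SignedPerm n) (p : Fin (n + 1)) (s : Bool) :
    (bDescents (n + 1) (insW n w p s) : ℤ) =
      (bDescents n w : ℤ) + deltaB n w (p : ℕ) (if s then (n : ℤ) + 1 else (n : ℤ)) := by
  rw [bDescents_cast, bDescents_cast]
  set t : ℤ := if s then (n : ℤ) + 1 else (n : ℤ) with ht
  set v : ℤ := if s then (n : ℤ) + 3 else (n : ℤ) + 1 with hv
  have hp : (p : ℕ) ≤ n := Fin.is_le p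
  set P := (p : ℕ) with hP
  set a : ℕ → ℤ := fun i => if wordB n w i < wordB n w (i + 1) then 1 else 0 with ha
  set g : ℕ → ℤ := fun j =>
    if wordB (n + 1) (insW n w p s) j < wordB (n + 1) (insW n w p s) (j + 1) then 1 else 0
    with hg
  have hvlt : ∀ x : ℤ, (phiB n x < v ↔ x ≤ t) := by
    intro x; cases s <;> simp only [hv, ht, if_true, if_false, Bool.false_eq_true] <;>
      [exact phiB_lt_low; exact phiB_lt_high]
  have hltv : ∀ x : ℤ, (v < phiB n x ↔ t < x) := by
    intro x; cases s <;> simp only [hv, ht, if_true, if_false, Bool.false_eq_true] <;>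
      [exact low_lt_phiB; exact high_lt_phiB]
  have hg_lt : ∀ j, j + 1 < P → g j = a j := by
    intro j hj
    have h1 : j < P := by omega
    simp only [hg, ha, wordB_insW, ← hP, if_pos h1, if_pos hj]
    simp [phiB_lt_phiB]
  have hg_gt : ∀ j, P < j → g j = a (j - 1) := by
    intro j hj
    have h1 : ¬ (j < P) := by omega
    have h2 : j ≠ P := by omega
    have h3 : ¬ (j + 1 < P) := by omega
    have h4 : j + 1 ≠ P := by omega
    have h5 : j + 1 - 1 = j - 1 + 1 := by omega
    simp only [hg, ha, wordB_insW, ← hP, if_neg h1, if_neg h2, if_neg h3, if_neg h4, h5]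
    simp [phiB_lt_phiB]
  have hg_p : g P = (if t < wordB n w P then 1 else 0) := by
    have h1 : ¬ (P < P) := by omega
    have h2 : ¬ (P + 1 < P) := by omega
    have h3 : P + 1 ≠ P := by omega
    have h4 : P + 1 - 1 = P := by omega
    simp only [hg, wordB_insW, ← hP, ← hv, if_neg h1, if_pos rfl, if_neg h2, if_neg h3, h4]
    simp [hltv]
  have hg_pm : 1 ≤ P → g (P - 1) = (if wordB n w (P - 1) ≤ t then 1 else 0) := by
    intro h0
    have h1 : P - 1 < P := by omega
    have h2 : P - 1 + 1 = P := by omega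
    simp only [hg, wordB_insW, ← hP, ← hv, if_pos h1, h2, if_neg (lt_irrefl P), if_pos rfl]
    simp [hvlt]
  by_cases hP0 : P = 0
  · rw [Finset.sum_range_succ']
    have e1 : ∀ i ∈ Finset.range n, g (i + 1) = a i := by
      intro i _
      rw [hg_gt (i + 1) (by omega)]
      simp
    have h0 := hg_p
    rw [hP0] at h0
    simp only [hg] at h0
    rw [Finset.sum_congr rfl e1, deltaB, if_pos hP0, h0]
  · have h1 : 1 ≤ P := by omega
    have e1 : ∑ j ∈ Finset.range (n + 1), g j =
        ∑ j ∈ Finset.range (P - 1), g j + g (P - 1) + g P +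
          ∑ j ∈ Finset.Ico (P + 1) (n + 1), g j := by
      rw [Finset.range_eq_Ico,
        ← Finset.sum_Ico_consecutive g (Nat.zero_le (P - 1)) (show P - 1 ≤ n + 1 by omega),
        Finset.sum_eq_sum_Ico_succ_bot (show P - 1 < n + 1 by omega),
        show P - 1 + 1 = P from by omega,
        Finset.sum_eq_sum_Ico_succ_bot (show P < n + 1 by omega),
        ← Finset.range_eq_Ico]
      ring
    have e2 : ∑ j ∈ Finset.Ico (P + 1) (n + 1), g j = ∑ i ∈ Finset.Ico P n, a i := by
      rw [Finset.sum_Ico_eq_sum_range, Finset.sum_Ico_eq_sum_range,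
        show n + 1 - (P + 1) = n - P from by omega]
      refine Finset.sum_congr rfl (fun i _ => ?_)
      rw [hg_gt (P + 1 + i) (by omega), show P + 1 + i - 1 = P + i from by omega]
    have e3 : ∑ i ∈ Finset.range n, a i =
        ∑ j ∈ Finset.range (P - 1), a j + a (P - 1) + ∑ i ∈ Finset.Ico P n, a i := by
      rw [Finset.range_eq_Ico,
        ← Finset.sum_Ico_consecutive a (Nat.zero_le (P - 1)) (show P - 1 ≤ n by omega),
        Finset.sum_eq_sum_Ico_succ_bot (show P - 1 < n by omega),
        show P - 1 + 1 = P from by omega, ← Finset.range_eq_Ico]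
      ring
    have e4 : ∀ j ∈ Finset.range (P - 1), g j = a j := by
      intro j hj
      exact hg_lt j (by have := Finset.mem_range.mp hj; omega)
    have haP : a (P - 1) = (if wordB n w (P - 1) < wordB n w P then (1 : ℤ) else 0) := by
      simp only [ha]
      rw [show P - 1 + 1 = P from by omega]
    rw [e1, Finset.sum_congr rfl e4, e2, e3, deltaB, if_neg hP0, hg_pm h1, hg_p, haP]
    ring

lemma sum_deltaB (n : ℕ) (w : SignedPerm n) :
    ∑ p : Fin (n + 1),
        (deltaB n w (p : ℕ) ((n : ℤ) + 1) + deltaB n w (p : ℕ) (n : ℤ)) =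
      2 * (n : ℤ) + 1 - 2 * (bDescents n w : ℤ) := by
  set a : ℕ → ℤ := fun i => if wordB n w i < wordB n w (i + 1) then 1 else 0 with ha
  set B : ℕ → ℤ := fun i =>
    (if wordB n w i ≤ (n : ℤ) + 1 then 1 else 0) + (if wordB n w i ≤ (n : ℤ) then 1 else 0)
    with hB
  set C : ℕ → ℤ := fun j =>
    (if (n : ℤ) + 1 < wordB n w j then 1 else 0) + (if (n : ℤ) < wordB n w j then 1 else 0)
    with hC
  rw [Fin.sum_univ_eq_sum_range
    (fun P => deltaB n w P ((n : ℤ) + 1) + deltaB n w P (n : ℤ)),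
    Finset.sum_range_succ']
  have hf : ∀ i ∈ Finset.range n,
      deltaB n w (i + 1) ((n : ℤ) + 1) + deltaB n w (i + 1) (n : ℤ) =
        B i + C (i + 1) - 2 * a i := by
    intro i _
    rw [deltaB, deltaB, if_neg (Nat.succ_ne_zero i), if_neg (Nat.succ_ne_zero i),
      show i + 1 - 1 = i from rfl]
    simp only [hB, hC, ha]
    ring
  have hf0 : deltaB n w 0 ((n : ℤ) + 1) + deltaB n w 0 (n : ℤ) = C 0 := by
    rw [deltaB, deltaB, if_pos rfl, if_pos rfl]
  rw [Finset.sum_congr rfl hf, hf0]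
  have e1 : ∑ i ∈ Finset.range n, (B i + C (i + 1) - 2 * a i) =
      ∑ i ∈ Finset.range n, (B i + C i) + (∑ i ∈ Finset.range n, C (i + 1) + C 0)
        - ∑ i ∈ Finset.range n, C i - C 0 - 2 * ∑ i ∈ Finset.range n, a i := by
    rw [Finset.sum_add_distrib, Finset.sum_sub_distrib, Finset.sum_add_distrib,
      ← Finset.mul_sum]
    ring
  have hBC : ∀ i ∈ Finset.range n, B i + C i = 2 := by
    intro i _
    simp only [hB, hC]
    split_ifs <;> omega
  have hCs : ∑ i ∈ Finset.range n, C (i + 1) + C 0 = ∑ i ∈ Finset.range (n + 1), C i :=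
    (Finset.sum_range_succ' C n).symm
  have hWn : wordB n w n = (n : ℤ) + 1 := by rw [wordB, dif_neg (lt_irrefl n)]
  have hCn : C n = 1 := by simp only [hC, hWn]; norm_num
  have hCtop : ∑ i ∈ Finset.range (n + 1), C i = ∑ i ∈ Finset.range n, C i + 1 := by
    rw [Finset.sum_range_succ, hCn]
  have hD := bDescents_cast n w
  rw [e1, Finset.sum_congr rfl hBC, Finset.sum_const, hCs, hCtop, ← hD]
  simp only [Finset.card_range, nsmul_eq_mul]
  push_cast
  ring

lemma prod_insW (n q : ℕ) (w : SignedPerm n) (p : Fin (n + 1)) (s : Bool) :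
    ∏ j ∈ Finset.range (n + 1),
        ((q : ℤ) + 2 * j + 1 - 2 * (bDescents (n + 1) (insW n w p s) : ℤ)) =
      ((q : ℤ) + 2 * n + 1 - 2 * (bDescents n w : ℤ)) *
          (∏ j ∈ Finset.range n, ((q : ℤ) + 2 * j + 1 - 2 * (bDescents n w : ℤ))) +
        deltaB n w (p : ℕ) (if s then (n : ℤ) + 1 else (n : ℤ)) *
          ((((q : ℤ) - 1 - 2 * (bDescents n w : ℤ)) -
              ((q : ℤ) + 2 * n + 1 - 2 * (bDescents n w : ℤ))) *
            (∏ j ∈ Finset.range n, ((q : ℤ) + 2 * j + 1 - 2 * (bDescents n w : ℤ)))) := by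
  set D : ℤ := (bDescents n w : ℤ) with hD
  have hd := bDescents_insW n w p s
  rcases deltaB_mem n w (p : ℕ) (if s then (n : ℤ) + 1 else (n : ℤ)) with h0 | h1
  · rw [h0] at hd ⊢
    have e : ∀ j ∈ Finset.range (n + 1),
        (q : ℤ) + 2 * j + 1 - 2 * (bDescents (n + 1) (insW n w p s) : ℤ) =
          (q : ℤ) + 2 * j + 1 - 2 * D := by
      intro j _; rw [hd]; ring
    rw [Finset.prod_congr rfl e, Finset.prod_range_succ]
    push_cast
    ring
  · rw [h1] at hd ⊢
    have e : ∀ j ∈ Finset.range (n + 1),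
        (q : ℤ) + 2 * j + 1 - 2 * (bDescents (n + 1) (insW n w p s) : ℤ) =
          (q : ℤ) + 2 * j - 1 - 2 * D := by
      intro j _; rw [hd]; ring
    rw [Finset.prod_congr rfl e, Finset.prod_range_succ']
    have e2 : ∀ i ∈ Finset.range n,
        (q : ℤ) + 2 * (i + 1 : ℕ) - 1 - 2 * D = (q : ℤ) + 2 * i + 1 - 2 * D := by
      intro i _; push_cast; ring
    rw [Finset.prod_congr rfl e2]
    push_cast
    ring

lemma sum_insW (n q : ℕ) (w : SignedPerm n) :
    ∑ p : Fin (n + 1), ∑ s : Bool,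
        ∏ j ∈ Finset.range (n + 1),
          ((q : ℤ) + 2 * j + 1 - 2 * (bDescents (n + 1) (insW n w p s) : ℤ)) =
      (2 * (n : ℤ) + 2) * (q : ℤ) *
        ∏ j ∈ Finset.range n, ((q : ℤ) + 2 * j + 1 - 2 * (bDescents n w : ℤ)) := by
  set D : ℤ := (bDescents n w : ℤ) with hD
  set Pr : ℤ := ∏ j ∈ Finset.range n, ((q : ℤ) + 2 * j + 1 - 2 * D) with hPr
  set Base : ℤ := ((q : ℤ) + 2 * n + 1 - 2 * D) * Pr with hBase
  set Diff : ℤ := (((q : ℤ) - 1 - 2 * D) - ((q : ℤ) + 2 * n + 1 - 2 * D)) * Pr with hDiff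
  have hper : ∀ p : Fin (n + 1),
      ∑ s : Bool,
        ∏ j ∈ Finset.range (n + 1),
          ((q : ℤ) + 2 * j + 1 - 2 * (bDescents (n + 1) (insW n w p s) : ℤ)) =
      2 * Base +
        (deltaB n w (p : ℕ) ((n : ℤ) + 1) + deltaB n w (p : ℕ) (n : ℤ)) * Diff := by
    intro p
    rw [Fintype.sum_bool, prod_insW n q w p true, prod_insW n q w p false]
    simp only [if_true, Bool.false_eq_true, if_false]
    ring
  rw [Finset.sum_congr rfl (fun p _ => hper p), Finset.sum_add_distrib,
    Finset.sum_const, ← Finset.sum_mul, sum_deltaB]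
  simp only [Finset.card_univ, Fintype.card_fin, nsmul_eq_mul]
  rw [hBase, hDiff]
  push_cast
  ring

lemma insW_bijective (n : ℕ) :
    Function.Bijective
      (fun x : SignedPerm n × Fin (n + 1) × Bool => insW n x.1 x.2.1 x.2.2) := by
  rw [Fintype.bijective_iff_injective_and_card]
  constructor
  · rintro ⟨w, p, s⟩ ⟨w', p', s'⟩ h
    simp only [insW, Prod.mk.injEq] at h
    obtain ⟨hperm, hsign⟩ := h
    have hpp : p = p' := by
      have h3 : insP w'.1 p' p = Fin.last n := by rw [← hperm]; exact insP_self w.1 p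
      exact (insP w'.1 p').injective (h3.trans (insP_self w'.1 p').symm)
    subst hpp
    have hss : s = s' := by
      have := congrFun hsign p
      rwa [Fin.insertNth_apply_same, Fin.insertNth_apply_same] at this
    have hw2 : w.2 = w'.2 := funext fun i => by
      have := congrFun hsign (p.succAbove i)
      rwa [Fin.insertNth_apply_succAbove, Fin.insertNth_apply_succAbove] at this
    have hw1 : w.1 = w'.1 := by
      apply Equiv.ext; intro i
      have h4 : insP w.1 p (p.succAbove i) = insP w'.1 p (p.succAbove i) := by rw [hperm]
      rw [insP_succAbove, insP_succAbove] at h4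
      exact Fin.castSucc_injective n h4
    have hw : w = w' := Prod.ext hw1 hw2
    simp [hw, hss]
  · simp only [Fintype.card_prod, Fintype.card_perm, Fintype.card_fun, Fintype.card_fin,
      Fintype.card_bool, Nat.factorial_succ]
    ring

lemma main_aux (q : ℕ) : ∀ n : ℕ,
    ∑ w : SignedPerm n, ∏ j ∈ Finset.range n,
        ((q : ℤ) + 2 * j + 1 - 2 * (bDescents n w : ℤ)) =
      (q : ℤ) ^ n * 2 ^ n * (Nat.factorial n)
  | 0 => by
    simp [Fintype.card_prod, Fintype.card_perm]
  | (n + 1) => by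
    rw [← Fintype.sum_bijective _ (insW_bijective n)
      (fun x : SignedPerm n × Fin (n + 1) × Bool =>
        ∏ j ∈ Finset.range (n + 1),
          ((q : ℤ) + 2 * j + 1 - 2 * (bDescents (n + 1) (insW n x.1 x.2.1 x.2.2) : ℤ)))
      _ (fun x => rfl)]
    rw [Fintype.sum_prod_type]
    have e : ∀ w : SignedPerm n,
        ∑ y : Fin (n + 1) × Bool,
          ∏ j ∈ Finset.range (n + 1),
            ((q : ℤ) + 2 * j + 1 - 2 * (bDescents (n + 1) (insW n w y.1 y.2) : ℤ)) =
        (2 * (n : ℤ) + 2) * (q : ℤ) *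
          ∏ j ∈ Finset.range n, ((q : ℤ) + 2 * j + 1 - 2 * (bDescents n w : ℤ)) := by
      intro w
      rw [Fintype.sum_prod_type]
      exact sum_insW n q w
    rw [Finset.sum_congr rfl (fun w _ => e w), ← Finset.mul_sum, main_aux q n,
      Nat.factorial_succ]
    push_cast
    ring

/-- The type-`B` shuffling measure
`H_{B_n,q}(w) = (q+1-2d(w))(q+3-2d(w))⋯(q+2n-1-2d(w)) / (q^n · 2^n · n!)`
sums to `1` over `B_n`. -/
theorem sum_shuffle_measure_hyperoctahedral (n q : ℕ) (hn : 1 ≤ n) (hq : Odd q)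
    (hq0 : 0 < q) :
    ∑ w : SignedPerm n, ∏ j ∈ Finset.range n,
        ((q : ℤ) + 2 * j + 1 - 2 * (bDescents n w : ℤ)) =
      (q : ℤ) ^ n * 2 ^ n * (Nat.factorial n) := by
  exact main_aux q n
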